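/- Let F be in the class ℬ with Taylor expansion F(z) = ∑_{k=0}^∞ b_k z^k, and let n ≥ 1 be a natural number. Then for all r with 0 ≤ r ≤ √(n/(n+2)) one has ∑_{k=n+1}^∞ k² |b_k|² r^{2k−2} ≤ ((n+2)^{n+2}/(4 n^n)) · r^{2n}. -/

import Mathlib

open Metric

open Complex intervalIntegral Real in
lemma orth (j k : ℕ) :
    (∫ θ in (0:ℝ)..(2*π), Complex.exp (((j:ℂ)-k) * θ * Complex.I)) =
      if j = k then (2*π : ℂ) else 0 := by
  rcases eq_or_ne j k with h | h
  · simp [h]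
  · rw [if_neg h]
    have hc : ((j:ℂ)-k) * Complex.I ≠ 0 := by
      simp [Complex.ext_iff, sub_eq_zero]
      exact_mod_cast fun hh => h (Nat.cast_injective hh)
    have : ∀ θ : ℝ, ((j:ℂ)-k) * θ * Complex.I = (((j:ℂ)-k) * Complex.I) * θ := by
      intro θ; ring
    simp_rw [this]
    rw [integral_exp_mul_complex hc]
    have : (((j:ℂ)-k) * Complex.I) * (2*π:ℝ) = ((j:ℤ)-(k:ℤ) : ℤ) * (2*π*Complex.I) := by
      push_cast; ring
    rw [this, Complex.exp_int_mul_two_pi_mul_I]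
    simp

open Complex intervalIntegral Real in
lemma parseval_finite (c : ℕ → ℂ) (N : ℕ) :
    (∫ θ in (0:ℝ)..(2*π),
        ‖∑ k ∈ Finset.range N, c k * Complex.exp ((k:ℂ) * (θ:ℂ) * Complex.I)‖^2)
      = 2*π * ∑ k ∈ Finset.range N, ‖c k‖^2 := by
  set S : ℝ → ℂ := fun θ => ∑ k ∈ Finset.range N, c k * Complex.exp ((k:ℂ) * (θ:ℂ) * Complex.I) with hS
  have key : (∫ θ in (0:ℝ)..(2*π), (S θ * (starRingEnd ℂ) (S θ)))
      = (2*π : ℂ) * ∑ k ∈ Finset.range N, (‖c k‖:ℂ)^2 := by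
    have expand : ∀ θ : ℝ, S θ * (starRingEnd ℂ) (S θ)
        = ∑ j ∈ Finset.range N, ∑ k ∈ Finset.range N,
            (c j * (starRingEnd ℂ) (c k)) * Complex.exp (((j:ℂ)-k) * θ * Complex.I) := by
      intro θ
      rw [hS]
      simp only [map_sum, Finset.sum_mul_sum, map_mul]
      refine Finset.sum_congr rfl fun j _ => Finset.sum_congr rfl fun k _ => ?_
      have : (starRingEnd ℂ) (Complex.exp ((k:ℂ) * θ * Complex.I))
          = Complex.exp (-((k:ℂ) * θ * Complex.I)) := by
        rw [← Complex.exp_conj]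
        congr 1
        simp [Complex.ext_iff]
      rw [this]
      rw [show c j * Complex.exp ((j:ℂ) * θ * Complex.I) * ((starRingEnd ℂ) (c k) * Complex.exp (-((k:ℂ) * θ * Complex.I))) = c j * (starRingEnd ℂ) (c k) * (Complex.exp ((j:ℂ) * θ * Complex.I) * Complex.exp (-((k:ℂ) * θ * Complex.I))) from by ring, ← Complex.exp_add]
      ring_nf
    rw [intervalIntegral.integral_congr (fun θ _ => expand θ)]
    rw [intervalIntegral.integral_finset_sum]
    · have inner : ∀ j ∈ Finset.range N,
          (∫ θ in (0:ℝ)..(2*π), ∑ k ∈ Finset.range N,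
            (c j * (starRingEnd ℂ) (c k)) * Complex.exp (((j:ℂ)-k) * θ * Complex.I))
          = ∑ k ∈ Finset.range N,
              (c j * (starRingEnd ℂ) (c k)) * (if j = k then (2*π:ℂ) else 0) := by
        intro j _
        rw [intervalIntegral.integral_finset_sum]
        · exact Finset.sum_congr rfl fun k _ => by
            rw [intervalIntegral.integral_const_mul, orth]
        · intro k _
          apply Continuous.intervalIntegrable
          fun_prop
      rw [Finset.sum_congr rfl inner]
      simp only [mul_ite, mul_zero, Finset.sum_ite_eq, Finset.mul_sum]
      refine Finset.sum_congr rfl fun j hj => ?_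
      rw [if_pos hj, Complex.mul_conj]
      rw [Complex.normSq_eq_norm_sq]
      push_cast
      ring_nf
    · intro j _
      apply Continuous.intervalIntegrable
      apply continuous_finset_sum
      intro k _
      fun_prop
  have hSc : ∀ θ : ℝ, S θ * (starRingEnd ℂ) (S θ) = ((‖S θ‖^2 : ℝ) : ℂ) := by
    intro θ
    rw [Complex.mul_conj, Complex.normSq_eq_norm_sq]
    try push_cast
    try ring
  have final : ((∫ θ in (0:ℝ)..(2*π), ‖S θ‖^2 : ℝ) : ℂ)
      = ((2*π * ∑ k ∈ Finset.range N, ‖c k‖^2 : ℝ) : ℂ) := by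
    rw [← intervalIntegral.integral_ofReal]
    rw [intervalIntegral.integral_congr (fun θ _ => (hSc θ).symm)]
    rw [key]; push_cast
    try ring
  rw [hS] at final
  simp only [Complex.ofReal_mul, Complex.ofReal_natCast] at final ⊢
  exact_mod_cast final

open Complex Real in
lemma parseval_bound (a : ℕ → ℂ) (g : ℂ → ℂ) (ρ M : ℝ) (hρ0 : 0 < ρ)
    (hsum : ∀ z : ℂ, ‖z‖ = ρ → HasSum (fun k => a k * z^k) (g z))
    (hM : 0 ≤ M) (hg : ∀ z : ℂ, ‖z‖ = ρ → ‖g z‖ ≤ M)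
    (hu : Summable (fun k => ‖a k‖ * ρ^k)) :
    Summable (fun k => ‖a k‖^2 * ρ^(2*k)) ∧ (∑' k, ‖a k‖^2 * ρ^(2*k)) ≤ M^2 := by
  set u : ℕ → ℝ := fun k => ‖a k‖ * ρ^k with hu_def
  have hu0 : ∀ k, 0 ≤ u k := fun k => mul_nonneg (norm_nonneg _) (pow_nonneg hρ0.le _)
  set ε : ℕ → ℝ := fun N => ∑' k, u (k+N) with hε_def
  have hε0 : ∀ N, 0 ≤ ε N := fun N => tsum_nonneg (fun k => hu0 _)
  set c : ℕ → ℂ := fun k => a k * (ρ:ℂ)^k with hc_def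
  have hcnorm : ∀ k, ‖c k‖ = u k := by
    intro k
    simp [hc_def, hu_def, abs_of_pos hρ0]
  -- the circle points
  have hz : ∀ θ : ℝ, ‖(ρ:ℂ) * Complex.exp ((θ:ℂ) * Complex.I)‖ = ρ := by
    intro θ
    rw [norm_mul, Complex.norm_exp_ofReal_mul_I]
    simp [abs_of_pos hρ0]
  have hterm : ∀ (θ : ℝ) (k : ℕ),
      c k * Complex.exp ((k:ℂ) * (θ:ℂ) * Complex.I)
        = a k * ((ρ:ℂ) * Complex.exp ((θ:ℂ) * Complex.I))^k := by
    intro θ k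
    rw [mul_pow, ← Complex.exp_nat_mul, hc_def]
    ring_nf
  -- pointwise bound on partial sums
  have hpoint : ∀ (N : ℕ) (θ : ℝ),
      ‖∑ k ∈ Finset.range N, c k * Complex.exp ((k:ℂ) * (θ:ℂ) * Complex.I)‖ ≤ M + ε N := by
    intro N θ
    set z := (ρ:ℂ) * Complex.exp ((θ:ℂ) * Complex.I) with hzdef
    have hzρ : ‖z‖ = ρ := hz θ
    have hgz := hsum z hzρ
    have hnorm_f : ∀ k, ‖a k * z^k‖ = u k := by
      intro k
      rw [norm_mul, norm_pow, hzρ]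
    have hsum_shift : Summable (fun k => ‖a (k+N) * z^(k+N)‖) := by
      have he : (fun k => ‖a (k+N) * z^(k+N)‖) = fun k => u (k+N) :=
        funext fun k => hnorm_f (k+N)
      rw [he]
      exact (summable_nat_add_iff N).2 hu
    have htail : HasSum (fun k => a (k+N) * z^(k+N)) (g z - ∑ k ∈ Finset.range N, a k * z^k) := by
      apply (hasSum_nat_add_iff (f := fun k => a k * z^k) N).2
      rw [sub_add_cancel]
      exact hgz
    have heq : ∑ k ∈ Finset.range N, c k * Complex.exp ((k:ℂ) * (θ:ℂ) * Complex.I)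
        = g z - ∑' k, a (k+N) * z^(k+N) := by
      rw [Finset.sum_congr rfl (fun k _ => hterm θ k)]
      have := htail.tsum_eq
      rw [this]
      ring
    rw [heq]
    refine le_trans (norm_sub_le _ _) ?_
    gcongr
    · exact hg z hzρ
    · refine le_trans (norm_tsum_le_tsum_norm hsum_shift) ?_
      rw [hε_def]
      simp only []
      exact le_of_eq (tsum_congr fun k => hnorm_f (k+N))
  -- integral bound : partial sums of squares
  have hstep : ∀ N : ℕ, ∑ k ∈ Finset.range N, ‖a k‖^2 * ρ^(2*k) ≤ (M + ε N)^2 := by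
    intro N
    have h1 := parseval_finite c N
    have h2 : (∫ θ in (0:ℝ)..(2*π),
        ‖∑ k ∈ Finset.range N, c k * Complex.exp ((k:ℂ) * (θ:ℂ) * Complex.I)‖^2)
        ≤ ∫ _ in (0:ℝ)..(2*π), (M + ε N)^2 := by
      apply intervalIntegral.integral_mono_on (by positivity)
      · apply Continuous.intervalIntegrable
        apply Continuous.pow
        apply Continuous.norm
        apply continuous_finset_sum
        intro k _
        fun_prop
      · exact intervalIntegrable_const
      · intro θ _
        have := hpoint N θ
        have h0 : (0:ℝ) ≤ M + ε N := add_nonneg hM (hε0 N)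
        nlinarith [norm_nonneg (∑ k ∈ Finset.range N, c k * Complex.exp ((k:ℂ) * (θ:ℂ) * Complex.I))]
    rw [h1, intervalIntegral.integral_const, smul_eq_mul] at h2
    have hπ : 0 < 2*π := by positivity
    have h3 : ∑ k ∈ Finset.range N, ‖c k‖^2 ≤ (M + ε N)^2 := by
      nlinarith
    refine le_trans (le_of_eq ?_) h3
    refine Finset.sum_congr rfl fun k _ => ?_
    rw [hcnorm, hu_def]
    simp only []
    rw [mul_pow, ← pow_mul, mul_comm k 2]
  -- uniform bound and limit
  have hεmono : ∀ N, ε N ≤ ε 0 := by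
    intro N
    have h1 := Summable.sum_add_tsum_nat_add (f := u) N hu
    have h2 : (0:ℝ) ≤ ∑ k ∈ Finset.range N, u k := Finset.sum_nonneg fun k _ => hu0 k
    have h3 : ε 0 = ∑' k, u k := by
      rw [hε_def]
      exact tsum_congr fun k => by rw [Nat.add_zero]
    rw [h3]
    rw [hε_def]
    simp only []
    linarith
  have hnonneg : ∀ k, 0 ≤ ‖a k‖^2 * ρ^(2*k) :=
    fun k => mul_nonneg (sq_nonneg _) (pow_nonneg hρ0.le _)
  have hsummable : Summable (fun k => ‖a k‖^2 * ρ^(2*k)) := by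
    apply summable_of_sum_range_le hnonneg (c := (M + ε 0)^2)
    intro N
    refine le_trans (hstep N) ?_
    have h0 : 0 ≤ M + ε N := add_nonneg hM (hε0 N)
    nlinarith [hεmono N, hε0 N]
  refine ⟨hsummable, ?_⟩
  have hεtend : Filter.Tendsto ε Filter.atTop (nhds 0) := by
    have hpartial := hu.hasSum.tendsto_sum_nat
    have heq : ε = fun N => (∑' k, u k) - ∑ k ∈ Finset.range N, u k := by
      funext N
      have h1 := Summable.sum_add_tsum_nat_add (f := u) N hu
      rw [hε_def]
      simp only []
      linarith
    rw [heq]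
    have := Filter.Tendsto.const_sub (∑' k, u k) hpartial
    simpa using this
  apply Real.tsum_le_of_sum_range_le hnonneg
  intro N₀
  have hbound : ∀ N ≥ N₀, ∑ k ∈ Finset.range N₀, ‖a k‖^2 * ρ^(2*k) ≤ (M + ε N)^2 := by
    intro N hN
    refine le_trans ?_ (hstep N)
    exact Finset.sum_le_sum_of_subset_of_nonneg
      (Finset.range_subset_range.2 hN) (fun k _ _ => hnonneg k)
  have hlim : Filter.Tendsto (fun N => (M + ε N)^2) Filter.atTop (nhds (M^2)) := by
    have := (Filter.Tendsto.const_add M hεtend).pow 2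
    simpa using this
  exact ge_of_tendsto hlim (Filter.eventually_atTop.2 ⟨N₀, hbound⟩)

lemma coeff_summable (b : ℕ → ℂ)
    (h : ∀ z ∈ ball (0:ℂ) 1, Summable (fun k => b k * z^k))
    {s : ℝ} (h0 : 0 ≤ s) (h1 : s < 1) : Summable (fun k => ‖b k‖ * s^k) := by
  set t : ℝ := (s+1)/2 with ht
  have hst : s < t := by rw [ht]; linarith
  have ht0 : 0 < t := by rw [ht]; linarith
  have ht1 : t < 1 := by rw [ht]; linarith
  have hmem : (t:ℂ) ∈ ball (0:ℂ) 1 := by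
    simp [abs_of_pos ht0, ht1]
  have hs := h _ hmem
  have htend : Filter.Tendsto (fun k => ‖b k * (t:ℂ)^k‖) Filter.atTop (nhds 0) := by
    simpa using hs.tendsto_atTop_zero.norm
  obtain ⟨C, hC⟩ := htend.bddAbove_range
  have hCb : ∀ k, ‖b k‖ * t^k ≤ C := by
    intro k
    have := hC (Set.mem_range_self k)
    simpa [abs_of_pos ht0] using this
  refine Summable.of_nonneg_of_le
    (fun k => mul_nonneg (norm_nonneg _) (pow_nonneg h0 _))
    (f := fun k => C * (s/t)^k) (fun k => ?_) ?_
  · have hts : t * (s/t) = s := by field_simp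
    have heq : ‖b k‖ * s^k = (‖b k‖ * t^k) * (s/t)^k := by
      rw [mul_assoc, ← mul_pow, hts]
    rw [heq]
    exact mul_le_mul_of_nonneg_right (hCb k) (pow_nonneg (by positivity) _)
  · exact (summable_geometric_of_lt_one (by positivity)
      (by rw [div_lt_one ht0]; exact hst)).mul_left C

open FormalMultilinearSeries in
lemma deriv_hasSum (F : ℂ → ℂ) (b : ℕ → ℂ)
    (hF : DifferentiableOn ℂ F (ball (0:ℂ) 1))
    (hb : ∀ z ∈ ball (0:ℂ) 1, HasSum (fun k : ℕ => b k * z ^ k) (F z)) :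
    ∀ z ∈ ball (0:ℂ) 1, HasSum (fun k : ℕ => ((k:ℂ)+1) * b (k+1) * z ^ k) (deriv F z) := by
  set p : FormalMultilinearSeries ℂ ℂ ℂ := ofScalars ℂ b with hp
  have hrad : 1 ≤ p.radius := by
    apply ENNReal.le_of_forall_nnreal_lt
    intro s hs
    have hs1 : (s:ℝ) < 1 := by exact_mod_cast hs
    apply p.le_radius_of_summable
    have := coeff_summable b (fun z hz => (hb z hz).summable) s.coe_nonneg hs1
    apply this.congr
    intro k
    rw [hp, ofScalars_norm]
  have hp1 : HasFPowerSeriesOnBall F p 0 1 := by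
    have h0 : (0:ENNReal) < 1 := by norm_num
    have hball := p.hasFPowerSeriesOnBall (lt_of_lt_of_le h0 hrad)
    have hball1 := hball.mono h0 hrad
    apply hball1.congr
    intro z hz
    rw [EMetric.mem_ball, edist_zero_right] at hz
    have hz' : z ∈ ball (0:ℂ) 1 := by
      rw [mem_ball_zero_iff]
      exact_mod_cast (show ‖z‖₊ < 1 by simpa [enorm_eq_nnnorm] using hz)
    have h1 := hball1.hasSum (y := z) (by simpa [edist_zero_right] using hz)
    simp only [zero_add] at h1
    have h2 : (fun n => p n fun _ => z) = fun n => b n * z^n := by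
      funext n
      rw [hp, ofScalars_apply_eq, smul_eq_mul]
    rw [h2] at h1
    exact h1.unique (hb z hz')
  intro z hz
  rw [mem_ball_zero_iff] at hz
  have hzmem : (‖z‖₊ : ENNReal) < 1 := by exact_mod_cast hz
  have hdiff : HasFDerivAt F (fderiv ℂ F z) z := by
    apply DifferentiableAt.hasFDerivAt
    exact hF.differentiableAt (isOpen_ball.mem_nhds (mem_ball_zero_iff.2 hz))
  have hwithin : HasFPowerSeriesWithinOnBall F p Set.univ 0 1 :=
    hasFPowerSeriesWithinOnBall_univ.2 hp1
  have hdW : HasFDerivWithinAt F (fderiv ℂ F z) (insert (0:ℂ) Set.univ) ((0:ℂ)+z) := by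
    rw [Set.insert_eq_self.2 (Set.mem_univ _), zero_add]
    exact hdiff.hasFDerivWithinAt
  have hsum := hwithin.hasSum_derivSeries_of_hasFDerivWithinAt
    (y := z) hzmem (by simp) hdW (by simp [uniqueDiffOn_univ])
  have happ := hsum.mapL (ContinuousLinearMap.apply ℂ ℂ (1:ℂ))
  have hval : ∀ k : ℕ, (ContinuousLinearMap.apply ℂ ℂ (1:ℂ)) (p.derivSeries k (fun _ => z))
      = ((k:ℂ)+1) * b (k+1) * z^k := by
    intro k
    have h1 : (fun _ : Fin k => z) = fun i : Fin k => z • (1:ℂ) := by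
      funext i; simp
    rw [ContinuousLinearMap.apply_apply, h1,
      (p.derivSeries k).map_smul_univ (fun _ : Fin k => z) (fun _ => (1:ℂ))]
    simp only [ContinuousLinearMap.smul_apply]
    rw [derivSeries_apply_diag]
    rw [hp, ofScalars_apply_eq]
    simp
    ring
  rw [funext hval] at happ
  have : (ContinuousLinearMap.apply ℂ ℂ (1:ℂ)) (fderiv ℂ F z) = deriv F z := by
    rw [ContinuousLinearMap.apply_apply, fderiv_apply_one_eq_deriv]
  rwa [this] at happ

theorem bloch_tail_estimate
    (F : ℂ → ℂ) (b : ℕ → ℂ)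
    (hF : DifferentiableOn ℂ F (ball (0:ℂ) 1))
    (hderiv : ∀ z ∈ ball (0:ℂ) 1, ‖deriv F z‖ ≤ 1 / (1 - ‖z‖ ^ 2))
    (hb : ∀ z ∈ ball (0:ℂ) 1, HasSum (fun k : ℕ => b k * z ^ k) (F z))
    (n : ℕ) (hn : 1 ≤ n)
    (r : ℝ) (hr0 : 0 ≤ r) (hr1 : r ≤ Real.sqrt ((n : ℝ) / (n + 2))) :
    ∑' k : ℕ, ((k + n + 1 : ℕ) : ℝ) ^ 2 * ‖b (k + n + 1)‖ ^ 2 * r ^ (2 * (k + n + 1) - 2)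
      ≤ ((n : ℝ) + 2) ^ (n + 2) / (4 * (n : ℝ) ^ n) * r ^ (2 * n) := by
  have hn0 : (0:ℝ) < n := by exact_mod_cast hn
  have hn2 : (0:ℝ) < (n:ℝ) + 2 := by linarith
  set a : ℕ → ℂ := fun k => ((k:ℂ)+1) * b (k+1) with ha_def
  have ha := deriv_hasSum F b hF hb
  set ρ : ℝ := Real.sqrt ((n : ℝ) / (n + 2)) with hρ_def
  have harg0 : 0 < (n:ℝ)/((n:ℝ)+2) := by positivity
  have harg1 : (n:ℝ)/((n:ℝ)+2) < 1 := by
    rw [div_lt_one hn2]; linarith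
  have hρ0 : 0 < ρ := Real.sqrt_pos.2 harg0
  have hρsq : ρ^2 = (n:ℝ)/((n:ℝ)+2) := Real.sq_sqrt harg0.le
  have hρ1 : ρ < 1 := by
    nlinarith [hρsq, hρ0]
  set M : ℝ := ((n:ℝ)+2)/2 with hM_def
  have hM0 : 0 ≤ M := by positivity
  have h1ρ : 1 - ρ^2 = 2/((n:ℝ)+2) := by
    rw [hρsq]; field_simp; ring
  have hMeq : 1/(1-ρ^2) = M := by
    rw [h1ρ, hM_def]; field_simp
  have hmem : ∀ z : ℂ, ‖z‖ = ρ → z ∈ ball (0:ℂ) 1 := by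
    intro z hz
    rw [mem_ball_zero_iff, hz]; exact hρ1
  have hg : ∀ z : ℂ, ‖z‖ = ρ → ‖deriv F z‖ ≤ M := by
    intro z hz
    have := hderiv z (hmem z hz)
    rwa [hz, hMeq] at this
  have hsumcirc : ∀ z : ℂ, ‖z‖ = ρ → HasSum (fun k => a k * z^k) (deriv F z) :=
    fun z hz => ha z (hmem z hz)
  have hu : Summable (fun k => ‖a k‖ * ρ^k) :=
    coeff_summable a (fun z hz => (ha z hz).summable) hρ0.le hρ1
  obtain ⟨hsumm2, hP⟩ := parseval_bound a (deriv F) ρ M hρ0 hsumcirc hM0 hg hu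
  -- rewrite the LHS
  have hanorm : ∀ j : ℕ, ‖a j‖ = ((j:ℝ)+1) * ‖b (j+1)‖ := by
    intro j
    rw [ha_def]
    simp only [norm_mul]
    congr 1
    have : ((j:ℂ)+1) = ((j+1:ℕ):ℂ) := by push_cast; ring
    rw [this, Complex.norm_natCast]
    push_cast; ring
  have hterm_eq : ∀ k : ℕ, ((k + n + 1 : ℕ) : ℝ) ^ 2 * ‖b (k + n + 1)‖ ^ 2 * r ^ (2 * (k + n + 1) - 2)
      = ‖a (k+n)‖^2 * r^(2*(k+n)) := by
    intro k
    have h1 : 2 * (k + n + 1) - 2 = 2*(k+n) := by omega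
    rw [h1, hanorm (k+n), mul_pow]
    push_cast
    ring
  rw [tsum_congr hterm_eq]
  -- compare with the Parseval series
  set C : ℝ := r^(2*n)/ρ^(2*n) with hC_def
  have hC0 : 0 ≤ C := by positivity
  have hrρ : r ≤ ρ := hr1
  have hcomp : ∀ k : ℕ, ‖a (k+n)‖^2 * r^(2*(k+n)) ≤ C * (‖a (k+n)‖^2 * ρ^(2*(k+n))) := by
    intro k
    have h1 : r^(2*(k+n)) ≤ C * ρ^(2*(k+n)) := by
      rw [hC_def]
      have e1 : r^(2*(k+n)) = r^(2*k) * r^(2*n) := by rw [← pow_add]; ring_nf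
      have e2 : ρ^(2*(k+n)) = ρ^(2*k) * ρ^(2*n) := by rw [← pow_add]; ring_nf
      rw [e1, e2]
      calc r^(2*k) * r^(2*n) ≤ ρ^(2*k) * r^(2*n) :=
            mul_le_mul_of_nonneg_right (pow_le_pow_left₀ hr0 hrρ _) (by positivity)
        _ = r^(2*n)/ρ^(2*n) * (ρ^(2*k) * ρ^(2*n)) := by
            field_simp
    calc ‖a (k+n)‖^2 * r^(2*(k+n)) ≤ ‖a (k+n)‖^2 * (C * ρ^(2*(k+n))) :=
          mul_le_mul_of_nonneg_left h1 (sq_nonneg _)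
      _ = C * (‖a (k+n)‖^2 * ρ^(2*(k+n))) := by ring
  have hsum_shift : Summable (fun k => ‖a (k+n)‖^2 * ρ^(2*(k+n))) :=
    (summable_nat_add_iff (f := fun k => ‖a k‖^2 * ρ^(2*k)) n).2 hsumm2
  have hsumL : Summable (fun k => ‖a (k+n)‖^2 * r^(2*(k+n))) := by
    refine Summable.of_nonneg_of_le (fun k => by positivity) hcomp ?_
    exact hsum_shift.mul_left C
  have htail_le : (∑' k, ‖a (k+n)‖^2 * ρ^(2*(k+n))) ≤ M^2 := by
    have h1 := Summable.sum_add_tsum_nat_add (f := fun k => ‖a k‖^2 * ρ^(2*k)) n hsumm2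
    have h2 : (0:ℝ) ≤ ∑ k ∈ Finset.range n, ‖a k‖^2 * ρ^(2*k) :=
      Finset.sum_nonneg fun k _ => by positivity
    linarith
  have hchain : (∑' k, ‖a (k+n)‖^2 * r^(2*(k+n))) ≤ C * M^2 := by
    calc (∑' k, ‖a (k+n)‖^2 * r^(2*(k+n)))
        ≤ ∑' k, C * (‖a (k+n)‖^2 * ρ^(2*(k+n))) :=
          Summable.tsum_le_tsum hcomp hsumL (hsum_shift.mul_left C)
      _ = C * ∑' k, ‖a (k+n)‖^2 * ρ^(2*(k+n)) := tsum_mul_left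
      _ ≤ C * M^2 := mul_le_mul_of_nonneg_left htail_le hC0
  refine le_trans hchain (le_of_eq ?_)
  have hρpow : ρ^(2*n) = (n:ℝ)^n / ((n:ℝ)+2)^n := by
    rw [pow_mul, hρsq, div_pow]
  rw [hC_def, hM_def, hρpow, pow_add]
  field_simp
  ring
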